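/- arXiv:1609.02644 — 5 statements merged into one kernel-verified Lean document; each statement's English description precedes it below -/
import Mathlib

section
/- With the equivariant tree labeling setup, the map E_γ(ρ) : π → G defined by E_γ(ρ)(A) = ρ(A) · W_γ(v₀, v₀·A) is a group homomorphism: for all A, B ∈ π, E_γ(ρ)(A B) = E_γ(ρ)(A) · E_γ(ρ)(B), and E_γ(ρ)(A⁻¹) = E_γ(ρ)(A)⁻¹. -/
/-- Propositions 2.5 and 2.8: with the equivariant tree labeling setup, the deformation
`E_γ(ρ)(A) = ρ(A) · W_γ(v₀, v₀·A)` is a group homomorphism. -/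
theorem deformation_is_homomorphism
    {V : Type*} (T : SimpleGraph V) (hT : T.IsTree)
    {G : Type*} [Group G] (γ : T.Dart → G)
    (hsymm : ∀ d : T.Dart, γ d.symm = (γ d)⁻¹)
    -- `W u v` is the common value of the ordered γ-product over walks from `u` to `v`
    (W : V → V → G)
    (hW : ∀ (u v : V) (p : T.Walk u v), W u v = ((p.darts.map γ).reverse).prod)
    -- right action of π on V by automorphisms of T
    {π : Type*} [Group π] (act : V → π → V)
    (hact_one : ∀ v, act v 1 = v)
    (hact_mul : ∀ (v : V) (A B : π), act (act v A) B = act v (A * B))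
    (hadj : ∀ (u v : V) (A : π), T.Adj u v ↔ T.Adj (act u A) (act v A))
    (ρ : π →* G)
    -- ρ-equivariance of γ with respect to the induced right action on darts
    (hequiv : ∀ (d : T.Dart) (A : π),
      γ ⟨(act d.toProd.1 A, act d.toProd.2 A), (hadj d.toProd.1 d.toProd.2 A).mp d.adj⟩
        = (ρ A)⁻¹ * γ d * ρ A)
    (v₀ : V) :
    (∀ A B : π, ρ (A * B) * W v₀ (act v₀ (A * B))
      = (ρ A * W v₀ (act v₀ A)) * (ρ B * W v₀ (act v₀ B))) ∧
    (∀ A : π, ρ A⁻¹ * W v₀ (act v₀ A⁻¹) = (ρ A * W v₀ (act v₀ A))⁻¹) := by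
  classical
  have hreach : ∀ u v : V, Nonempty (T.Walk u v) := fun u v =>
    hT.isConnected.preconnected u v
  -- concatenation
  have hcat : ∀ u v w : V, W u w = W v w * W u v := by
    intro u v w
    obtain ⟨p⟩ := hreach u v
    obtain ⟨q⟩ := hreach v w
    rw [hW u w (p.append q), hW u v p, hW v w q,
      SimpleGraph.Walk.darts_append, List.map_append, List.reverse_append,
      List.prod_append]
  have hone : ∀ u : V, W u u = 1 := by
    intro u
    rw [hW u u SimpleGraph.Walk.nil]; simp
  -- equivariance of W
  have hWequiv : ∀ (u v : V) (A : π),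
      W (act u A) (act v A) = (ρ A)⁻¹ * W u v * ρ A := by
    intro u v A
    obtain ⟨p⟩ := hreach u v
    let f : T →g T := ⟨fun x => act x A, fun {a b} h => (hadj a b A).mp h⟩
    have hmap : ∀ d : T.Dart, γ (f.mapDart d) = (ρ A)⁻¹ * γ d * ρ A := by
      intro d
      have : f.mapDart d
          = ⟨(act d.toProd.1 A, act d.toProd.2 A),
              (hadj d.toProd.1 d.toProd.2 A).mp d.adj⟩ := by
        apply SimpleGraph.Dart.ext
        rfl
      rw [this, hequiv]
    rw [hW (act u A) (act v A) (p.map f), hW u v p, SimpleGraph.Walk.darts_map,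
      List.map_map]
    have : (γ ∘ f.mapDart) = (fun g => (ρ A)⁻¹ * g * ρ A) ∘ γ := by
      funext d; exact hmap d
    rw [this, ← List.map_map, ← List.map_reverse]
    generalize (p.darts.map γ).reverse = l
    induction l with
    | nil => simp
    | cons a l ih =>
      rw [List.map_cons, List.prod_cons, List.prod_cons, ih]
      group
  have key : ∀ A B : π, ρ (A * B) * W v₀ (act v₀ (A * B))
      = (ρ A * W v₀ (act v₀ A)) * (ρ B * W v₀ (act v₀ B)) := by
    intro A B
    have h1 : W v₀ (act v₀ (A * B))
        = W (act v₀ B) (act v₀ (A * B)) * W v₀ (act v₀ B) :=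
      hcat _ _ _
    have h2 : W (act v₀ B) (act (act v₀ A) B)
        = (ρ B)⁻¹ * W v₀ (act v₀ A) * ρ B := hWequiv _ _ _
    rw [hact_mul] at h2
    rw [h1, h2, map_mul]
    group
  refine ⟨key, fun A => ?_⟩
  have h := key A A⁻¹
  rw [mul_inv_cancel, map_one, one_mul, hact_one, hone] at h
  rw [eq_comm, inv_eq_iff_mul_eq_one]
  exact h.symm
end

section
/- With the equivariant tree labeling setup, let v₀' be a second base vertex and define E'_γ(ρ) : π → G by E'_γ(ρ)(A) = ρ(A) · W_γ(v₀', v₀'·A). Then for every A ∈ π, E'_γ(ρ)(A) = P · E_γ(ρ)(A) · P⁻¹, where P = W_γ(v₀, v₀'). -/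
/-- Lemma 2.6: changing the base vertex changes the deformation `E_γ(ρ)` by conjugation
by `P = W_γ(v₀, v₀')`. -/
theorem deformation_change_of_basepoint
    {V : Type*} (T : SimpleGraph V) (hT : T.IsTree)
    {G : Type*} [Group G] (γ : T.Dart → G)
    (hsymm : ∀ d : T.Dart, γ d.symm = (γ d)⁻¹)
    (W : V → V → G)
    (hW : ∀ (u v : V) (p : T.Walk u v), W u v = ((p.darts.map γ).reverse).prod)
    {π : Type*} [Group π] (act : V → π → V)
    (hact_one : ∀ v, act v 1 = v)
    (hact_mul : ∀ (v : V) (A B : π), act (act v A) B = act v (A * B))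
    (hadj : ∀ (u v : V) (A : π), T.Adj u v ↔ T.Adj (act u A) (act v A))
    (ρ : π →* G)
    (hequiv : ∀ (d : T.Dart) (A : π),
      γ ⟨(act d.toProd.1 A, act d.toProd.2 A), (hadj d.toProd.1 d.toProd.2 A).mp d.adj⟩
        = (ρ A)⁻¹ * γ d * ρ A)
    (v₀ v₀' : V) :
    ∀ A : π, ρ A * W v₀' (act v₀' A)
      = (W v₀ v₀') * (ρ A * W v₀ (act v₀ A)) * (W v₀ v₀')⁻¹ := by
  intro A
  -- the graph hom corresponding to acting by A
  let f : T →g T := ⟨fun v => act v A, fun {a b} h => (hadj a b A).mp h⟩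
  -- choose walks
  obtain ⟨p⟩ := hT.isConnected v₀ v₀'
  obtain ⟨q⟩ := hT.isConnected v₀ (act v₀ A)
  -- the ordered product of a walk
  let Wp : ∀ {u v : V}, T.Walk u v → G :=
    fun {u v} r => ((r.darts.map γ).reverse).prod
  have hmul : ∀ {u v w : V} (r : T.Walk u v) (s : T.Walk v w),
      Wp (r.append s) = Wp s * Wp r := by
    intro u v w r s
    simp only [Wp, SimpleGraph.Walk.darts_append, List.map_append, List.reverse_append, List.prod_append]
  have hinv : ∀ {u v : V} (r : T.Walk u v), Wp r.reverse = (Wp r)⁻¹ := by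
    intro u v r
    simp only [Wp, SimpleGraph.Walk.darts_reverse, List.map_reverse, List.reverse_reverse,
      List.prod_inv_reverse, List.map_map]
    congr 1
    refine List.map_congr_left fun d _ => ?_
    simp [Function.comp, hsymm]
  have hdart : ∀ d : T.Dart, γ (f.mapDart d) = (ρ A)⁻¹ * γ d * ρ A := by
    intro d
    have : f.mapDart d
        = ⟨(act d.toProd.1 A, act d.toProd.2 A), (hadj d.toProd.1 d.toProd.2 A).mp d.adj⟩ := by
      apply SimpleGraph.Dart.ext
      rfl
    rw [this, hequiv]
  have hconj : ∀ {u v : V} (r : T.Walk u v),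
      Wp (r.map f) = (ρ A)⁻¹ * Wp r * ρ A := by
    intro u v r
    simp only [Wp, SimpleGraph.Walk.darts_map, List.map_map]
    induction r with
    | nil => simp
    | cons h r ih =>
        simp only [SimpleGraph.Walk.darts_cons, List.map_cons, List.reverse_cons,
          List.prod_append, List.prod_cons, List.prod_nil, mul_one, ih, Function.comp]
        rw [hdart]
        group
  -- the main computation
  have key : W v₀' (act v₀' A) = Wp (p.reverse.append (q.append (p.map f))) :=
    hW _ _ _
  rw [key, hmul, hmul, hinv, hconj, hW v₀ v₀' p, hW v₀ (act v₀ A) q]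
  show ρ A * ((ρ A)⁻¹ * Wp p * ρ A * Wp q * (Wp p)⁻¹) = Wp p * (ρ A * Wp q) * (Wp p)⁻¹
  group
end

section
/- With the equivariant tree labeling setup, let A ∈ π and let u be a vertex fixed by A (that is, u·A = u). Then E_γ(ρ)(A) = W_γ(v₀, u)⁻¹ · ρ(A) · W_γ(v₀, u). In particular, if e is an edge of T whose two endpoints are both fixed by A, and u is the endpoint of e for which the unique path in T from v₀ to u does not traverse e, then E_γ(ρ)(A) = W_γ(v₀, u)⁻¹ · ρ(A) · W_γ(v₀, u). -/
private def mapWalk {V : Type*} {T : SimpleGraph V} {π : Type*} (act : V → π → V)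
    (hadj : ∀ (u v : V) (A : π), T.Adj u v ↔ T.Adj (act u A) (act v A)) (A : π) :
    ∀ {u v : V}, T.Walk u v → T.Walk (act u A) (act v A)
  | _, _, .nil => .nil
  | _, _, .cons h p => .cons ((hadj _ _ A).mp h) (mapWalk act hadj A p)

private lemma mapWalk_darts {V : Type*} {T : SimpleGraph V} {π : Type*} (act : V → π → V)
    (hadj : ∀ (u v : V) (A : π), T.Adj u v ↔ T.Adj (act u A) (act v A)) (A : π)
    {u v : V} (p : T.Walk u v) :
    (mapWalk act hadj A p).darts
      = p.darts.map (fun d => ⟨(act d.toProd.1 A, act d.toProd.2 A),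
          (hadj d.toProd.1 d.toProd.2 A).mp d.adj⟩) := by
  induction p with
  | nil => rfl
  | cons h p ih => simp [mapWalk, ih]

private lemma conj_prod {G : Type*} [Group G] {α : Type*} (g : G) (f : α → G) (l : List α) :
    (l.map (fun x => g⁻¹ * f x * g)).prod = g⁻¹ * (l.map f).prod * g := by
  induction l with
  | nil => simp
  | cons a t ih => simp only [List.map_cons, List.prod_cons, ih]; group

private lemma inv_rev_prod {G : Type*} [Group G] {α : Type*} (f : α → G) (l : List α) :
    (l.map (fun x => (f x)⁻¹)).prod = ((l.map f).reverse.prod)⁻¹ := by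
  induction l with
  | nil => simp
  | cons a t ih => simp [ih]

/-- Lemma 2.7: if `u` is a vertex fixed by `A`, then
`E_γ(ρ)(A) = W_γ(v₀,u)⁻¹ · ρ(A) · W_γ(v₀,u)`; in particular this holds when `u` is an
endpoint of an edge both of whose endpoints are fixed by `A`. -/
theorem deformation_on_stabilizer_is_conjugate
    {V : Type*} (T : SimpleGraph V) (hT : T.IsTree)
    {G : Type*} [Group G] (γ : T.Dart → G)
    (hsymm : ∀ d : T.Dart, γ d.symm = (γ d)⁻¹)
    (W : V → V → G)
    (hW : ∀ (u v : V) (p : T.Walk u v), W u v = ((p.darts.map γ).reverse).prod)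
    {π : Type*} [Group π] (act : V → π → V)
    (hact_one : ∀ v, act v 1 = v)
    (hact_mul : ∀ (v : V) (A B : π), act (act v A) B = act v (A * B))
    (hadj : ∀ (u v : V) (A : π), T.Adj u v ↔ T.Adj (act u A) (act v A))
    (ρ : π →* G)
    (hequiv : ∀ (d : T.Dart) (A : π),
      γ ⟨(act d.toProd.1 A, act d.toProd.2 A), (hadj d.toProd.1 d.toProd.2 A).mp d.adj⟩
        = (ρ A)⁻¹ * γ d * ρ A)
    (v₀ : V) :
    (∀ (A : π) (u : V), act u A = u →
      ρ A * W v₀ (act v₀ A) = (W v₀ u)⁻¹ * ρ A * W v₀ u) ∧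
    -- in particular, for an edge whose two endpoints are both fixed by `A`, taking `u` to be
    -- the endpoint whose path from `v₀` does not traverse the edge
    (∀ (A : π) (d : T.Dart), act d.toProd.1 A = d.toProd.1 → act d.toProd.2 A = d.toProd.2 →
      ∀ u : V, (u = d.toProd.1 ∨ u = d.toProd.2) →
      (∀ (p : T.Walk v₀ u), p.IsPath → d.edge ∉ p.edges) →
      ρ A * W v₀ (act v₀ A) = (W v₀ u)⁻¹ * ρ A * W v₀ u) := by
  have hconn : ∀ u v : V, T.Reachable u v := hT.isConnected.preconnected
  -- composition
  have hcomp : ∀ (a b c : V), W a c = W b c * W a b := by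
    intro a b c
    obtain ⟨p⟩ := hconn a b
    obtain ⟨q⟩ := hconn b c
    rw [hW a c (p.append q), hW b c q, hW a b p]
    simp [SimpleGraph.Walk.darts_append]
  -- inverse
  have hinv : ∀ (a b : V), W a b = (W b a)⁻¹ := by
    intro a b
    obtain ⟨p⟩ := hconn b a
    rw [hW a b p.reverse, hW b a p]
    rw [SimpleGraph.Walk.darts_reverse, List.map_reverse, List.reverse_reverse,
      List.map_map]
    have : (γ ∘ SimpleGraph.Dart.symm) = fun d : T.Dart => (γ d)⁻¹ := by
      funext d; exact hsymm d
    rw [this, inv_rev_prod]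
  -- equivariance of W
  have hW_equiv : ∀ (a b : V) (A : π), W (act a A) (act b A) = (ρ A)⁻¹ * W a b * ρ A := by
    intro a b A
    obtain ⟨p⟩ := hconn a b
    rw [hW _ _ (mapWalk act hadj A p), hW a b p, mapWalk_darts, List.map_map]
    have : ((γ ∘ fun d : T.Dart => (⟨(act d.toProd.1 A, act d.toProd.2 A),
        (hadj d.toProd.1 d.toProd.2 A).mp d.adj⟩ : T.Dart))) =
        fun d : T.Dart => (ρ A)⁻¹ * γ d * ρ A := by
      funext d; exact hequiv d A
    rw [this, ← List.map_reverse, ← List.map_reverse (f := γ), conj_prod]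
  have main : ∀ (A : π) (u : V), act u A = u →
      ρ A * W v₀ (act v₀ A) = (W v₀ u)⁻¹ * ρ A * W v₀ u := by
    intro A u hu
    have h1 : W v₀ (act v₀ A) = W u (act v₀ A) * W v₀ u := hcomp v₀ u (act v₀ A)
    have h2 : W u (act v₀ A) = (ρ A)⁻¹ * W u v₀ * ρ A := by
      have := hW_equiv u v₀ A
      rwa [hu] at this
    rw [h1, h2, hinv u v₀]
    group
  refine ⟨main, ?_⟩
  intro A d h1 h2 u hu _
  rcases hu with rfl | rfl
  · exact main A _ h1
  · exact main A _ h2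
end

section
/- Let G be a group, k a natural number, and a, g : {1, ..., k} → G with a_i · g_i = g_i · a_i for every i. For each i define c_i = a_{i-1} · a_{i-2} · ⋯ · a_1 and d_i = g_{i-1} · g_{i-2} · ⋯ · g_1 (so c_1 = d_1 = 1). Then (a_k · ⋯ · a_1) · ((c_k⁻¹ · g_k · c_k) · ⋯ · (c_1⁻¹ · g_1 · c_1)) = (g_k · ⋯ · g_1) · ((d_k⁻¹ · a_k · d_k) · ⋯ · (d_1⁻¹ · a_1 · d_1)), and both sides equal (a_k · g_k) · (a_{k-1} · g_{k-1}) · ⋯ · (a_1 · g_1). -/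
/-- `prodDesc f k = f k * f (k-1) * ⋯ * f 1` (decreasing index order). -/
def prodDesc {G : Type*} [Monoid G] (f : ℕ → G) (k : ℕ) : G :=
  (((List.range k).reverse).map (fun i => f (i + 1))).prod

lemma prodDesc_succ {G : Type*} [Monoid G] (f : ℕ → G) (k : ℕ) :
    prodDesc f (k + 1) = f (k + 1) * prodDesc f k := by
  simp [prodDesc, List.range_succ]

lemma prodDesc_congr {G : Type*} [Monoid G] (f f' : ℕ → G) (k : ℕ)
    (h : ∀ i, 1 ≤ i → i ≤ k → f i = f' i) : prodDesc f k = prodDesc f' k := by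
  induction k with
  | zero => rfl
  | succ n ih =>
    rw [prodDesc_succ, prodDesc_succ, h (n + 1) (by omega) (by omega),
      ih (fun i h1 h2 => h i h1 (by omega))]

lemma key {G : Type*} [Group G] (k : ℕ) (a g : ℕ → G) :
    prodDesc a k *
      prodDesc (fun i => (prodDesc a (i - 1))⁻¹ * g i * prodDesc a (i - 1)) k
      = prodDesc (fun i => a i * g i) k := by
  induction k with
  | zero => simp [prodDesc]
  | succ n ih =>
    rw [prodDesc_succ, prodDesc_succ, prodDesc_succ (fun i => a i * g i)]
    simp only [Nat.add_sub_cancel]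
    rw [← ih]
    group

/-- Theorem 3.2 (algebraic content): if `a i` and `g i` commute for each `i`, then with
`c i = a (i-1) ⋯ a 1` and `d i = g (i-1) ⋯ g 1`, the deformation of `a` by conjugated `g`'s
equals the deformation of `g` by conjugated `a`'s, and both equal `(a k g k) ⋯ (a 1 g 1)`. -/
theorem commuting_deformations_identity {G : Type*} [Group G] (k : ℕ) (a g : ℕ → G)
    (hcomm : ∀ i, 1 ≤ i → i ≤ k → a i * g i = g i * a i) :
    (prodDesc a k *
        prodDesc (fun i => (prodDesc a (i - 1))⁻¹ * g i * prodDesc a (i - 1)) k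
      = prodDesc g k *
        prodDesc (fun i => (prodDesc g (i - 1))⁻¹ * a i * prodDesc g (i - 1)) k) ∧
    (prodDesc a k *
        prodDesc (fun i => (prodDesc a (i - 1))⁻¹ * g i * prodDesc a (i - 1)) k
      = prodDesc (fun i => a i * g i) k) := by
  refine ⟨?_, key k a g⟩
  rw [key k a g, key k g a]
  exact prodDesc_congr _ _ k hcomm
end

section
/- With the equivariant tree labeling setup, suppose γ, α : Dart(T) → G both satisfy the inverse condition (γ(d.symm) = γ(d)⁻¹ and α(d.symm) = α(d)⁻¹) and ρ-equivariance, and suppose γ(d) · α(d) = α(d) · γ(d) for every dart d. For each dart d, let u(d) be the endpoint of the edge of d for which the unique path in T from v₀ to u(d) does not traverse that edge, and define new labelings γ'(d) = W_α(v₀, u(d))⁻¹ · γ(d) · W_α(v₀, u(d)) and α'(d) = W_γ(v₀, u(d))⁻¹ · α(d) · W_γ(v₀, u(d)). Then γ' and α' also satisfy the inverse condition, and for every A ∈ π: E_α(ρ)(A) · W_{γ'}(v₀, v₀·A) = E_γ(ρ)(A) · W_{α'}(v₀, v₀·A); that is, the deformation by γ of the deformation by α of ρ equals the deformation by α of the deformation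 by γ of ρ. -/
/-- Theorem 3.2: deformations along disjoint (multi-)hypersurfaces with pointwise commuting
labelings commute. With `γ' d = W_α(v₀, u d)⁻¹ γ(d) W_α(v₀, u d)` and
`α' d = W_γ(v₀, u d)⁻¹ α(d) W_γ(v₀, u d)`, both new labelings satisfy the inverse condition,
and `E_γ(E_α(ρ)) = E_α(E_γ(ρ))`, i.e. `E_α(ρ)(A) · W_{γ'}(v₀, v₀·A) = E_γ(ρ)(A) · W_{α'}(v₀, v₀·A)`. -/
theorem deformations_commute
    {V : Type*} (T : SimpleGraph V) (hT : T.IsTree)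
    {G : Type*} [Group G] (γ α : T.Dart → G)
    (hγsymm : ∀ d : T.Dart, γ d.symm = (γ d)⁻¹)
    (hαsymm : ∀ d : T.Dart, α d.symm = (α d)⁻¹)
    (Wγ Wα : V → V → G)
    (hWγ : ∀ (u v : V) (p : T.Walk u v), Wγ u v = ((p.darts.map γ).reverse).prod)
    (hWα : ∀ (u v : V) (p : T.Walk u v), Wα u v = ((p.darts.map α).reverse).prod)
    {π : Type*} [Group π] (act : V → π → V)
    (hact_one : ∀ v, act v 1 = v)
    (hact_mul : ∀ (v : V) (A B : π), act (act v A) B = act v (A * B))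
    (hadj : ∀ (u v : V) (A : π), T.Adj u v ↔ T.Adj (act u A) (act v A))
    (ρ : π →* G)
    (hγequiv : ∀ (d : T.Dart) (A : π),
      γ ⟨(act d.toProd.1 A, act d.toProd.2 A), (hadj d.toProd.1 d.toProd.2 A).mp d.adj⟩
        = (ρ A)⁻¹ * γ d * ρ A)
    (hαequiv : ∀ (d : T.Dart) (A : π),
      α ⟨(act d.toProd.1 A, act d.toProd.2 A), (hadj d.toProd.1 d.toProd.2 A).mp d.adj⟩
        = (ρ A)⁻¹ * α d * ρ A)
    (hcomm : ∀ d : T.Dart, γ d * α d = α d * γ d)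
    (v₀ : V)
    -- `u d` is the endpoint of the edge of `d` whose path from `v₀` does not traverse
    -- that edge
    (u : T.Dart → V)
    (hu_mem : ∀ d : T.Dart, u d = d.toProd.1 ∨ u d = d.toProd.2)
    (hu_path : ∀ (d : T.Dart) (p : T.Walk v₀ (u d)), p.IsPath → d.edge ∉ p.edges)
    -- `W_{γ'}` and `W_{α'}` are the ordered-product functions for the new labelings
    (Wγ' Wα' : V → V → G)
    (hWγ' : ∀ (x y : V) (p : T.Walk x y),
      Wγ' x y = ((p.darts.map (fun d => (Wα v₀ (u d))⁻¹ * γ d * Wα v₀ (u d))).reverse).prod)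
    (hWα' : ∀ (x y : V) (p : T.Walk x y),
      Wα' x y = ((p.darts.map (fun d => (Wγ v₀ (u d))⁻¹ * α d * Wγ v₀ (u d))).reverse).prod) :
    -- γ' and α' satisfy the inverse condition
    (∀ d : T.Dart,
      (Wα v₀ (u d.symm))⁻¹ * γ d.symm * Wα v₀ (u d.symm)
        = ((Wα v₀ (u d))⁻¹ * γ d * Wα v₀ (u d))⁻¹) ∧
    (∀ d : T.Dart,
      (Wγ v₀ (u d.symm))⁻¹ * α d.symm * Wγ v₀ (u d.symm)
        = ((Wγ v₀ (u d))⁻¹ * α d * Wγ v₀ (u d))⁻¹) ∧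
    -- E_γ(E_α(ρ)) = E_α(E_γ(ρ))
    (∀ A : π, (ρ A * Wα v₀ (act v₀ A)) * Wγ' v₀ (act v₀ A)
      = (ρ A * Wγ v₀ (act v₀ A)) * Wα' v₀ (act v₀ A)) := by

  classical
  obtain ⟨hconn, hacyc⟩ := hT
  -- uniqueness: any endpoint of the edge of `d` admitting a path from `v₀` avoiding
  -- the edge must be `u d`
  have key : ∀ (d : T.Dart) (x : V), (x = d.toProd.1 ∨ x = d.toProd.2) →
      ∀ (p : T.Walk v₀ x), p.IsPath → d.edge ∉ p.edges → x = u d := by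
    intro d x hx p hp he
    by_contra hne
    obtain ⟨q0⟩ := hconn.preconnected v₀ (u d)
    have hq : (q0.bypass).IsPath := q0.bypass_isPath
    have hqe : d.edge ∉ q0.bypass.edges := hu_path d q0.bypass hq
    have hadj' : T.Adj x (u d) ∧ s(x, u d) = d.edge := by
      rcases hx with hx | hx <;> rcases hu_mem d with hm | hm
      · exact absurd (hx.trans hm.symm) hne
      · subst hx; rw [hm]; exact ⟨d.adj, rfl⟩
      · subst hx; rw [hm]; exact ⟨d.adj.symm, Sym2.eq_swap⟩
      · exact absurd (hx.trans hm.symm) hne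
    set W := p.reverse.append q0.bypass with hW
    have hWe : d.edge ∉ W.edges := by
      rw [hW, SimpleGraph.Walk.edges_append, SimpleGraph.Walk.edges_reverse]
      simp only [List.mem_append, List.mem_reverse]
      tauto
    have hsingle : (SimpleGraph.Walk.cons hadj'.1 SimpleGraph.Walk.nil).IsPath :=
      SimpleGraph.Walk.IsPath.nil.cons (by simpa using hne)
    have huniq := hacyc.path_unique ⟨W.bypass, W.bypass_isPath⟩
      ⟨SimpleGraph.Walk.cons hadj'.1 SimpleGraph.Walk.nil, hsingle⟩
    have hmem : d.edge ∈ W.bypass.edges := by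
      have hc := congrArg (fun P : T.Path x (u d) => (P : T.Walk x (u d)).edges) huniq
      simp only at hc
      rw [hc]
      simp [hadj'.2]
    exact hWe (W.edges_bypass_subset hmem)
  -- `u d.symm = u d`
  have hus : ∀ d : T.Dart, u d.symm = u d := by
    intro d
    obtain ⟨q0⟩ := hconn.preconnected v₀ (u d.symm)
    refine key d (u d.symm) ?_ q0.bypass q0.bypass_isPath ?_
    · rcases hu_mem d.symm with h | h
      · exact Or.inr h
      · exact Or.inl h
    · rw [← d.edge_symm]
      exact hu_path d.symm q0.bypass q0.bypass_isPath
  -- ordered products along reversed walks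
  have hWrev : ∀ (β : T.Dart → G) (Wβ : V → V → G),
      (∀ (a b : V) (p : T.Walk a b), Wβ a b = ((p.darts.map β).reverse).prod) →
      ∀ (x y : V) (q : T.Walk x y), Wβ y x = (q.darts.map (fun d => β d.symm)).prod := by
    intro β Wβ hWβ x y q
    rw [hWβ y x q.reverse, SimpleGraph.Walk.darts_reverse]
    simp [List.map_reverse, List.map_map, Function.comp_def]
  have hα1 : Wα v₀ v₀ = 1 := by simpa using hWα v₀ v₀ SimpleGraph.Walk.nil
  have hγ1 : Wγ v₀ v₀ = 1 := by simpa using hWγ v₀ v₀ SimpleGraph.Walk.nil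
  -- main computation
  have main : ∀ (x y : V) (q : T.Walk x y), y = v₀ → q.IsPath →
      Wα v₀ x *
        (q.darts.map (fun d =>
          (Wα v₀ (u d.symm))⁻¹ * γ d.symm * Wα v₀ (u d.symm))).prod
      = Wγ v₀ x *
        (q.darts.map (fun d =>
          (Wγ v₀ (u d.symm))⁻¹ * α d.symm * Wγ v₀ (u d.symm))).prod := by
    intro x y q
    induction q with
    | nil =>
      rintro rfl _
      simp [hα1, hγ1]
    | @cons a b c h q ih =>
      rintro rfl hp
      have hpq : q.IsPath := hp.of_cons
      set d0 : T.Dart := ⟨(a, b), h⟩ with hd0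
      have hud : u d0.symm = b := by
        refine (key d0.symm b (Or.inl rfl) q.reverse hpq.reverse ?_).symm
        rw [SimpleGraph.Dart.edge_symm]
        rw [SimpleGraph.Walk.edges_reverse, List.mem_reverse]
        intro hmem
        exact ((SimpleGraph.Walk.cons_isPath_iff h q).mp hp).2
          (SimpleGraph.Walk.fst_mem_support_of_mem_edges q hmem)
      have eα : Wα c a = (α d0)⁻¹ * Wα c b := by
        rw [hWrev α Wα hWα a c (SimpleGraph.Walk.cons h q),
          hWrev α Wα hWα b c q]
        simp [hαsymm]
        rfl
      have eγ : Wγ c a = (γ d0)⁻¹ * Wγ c b := by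
        rw [hWrev γ Wγ hWγ a c (SimpleGraph.Walk.cons h q),
          hWrev γ Wγ hWγ b c q]
        simp [hγsymm]
        rfl
      have ih' := ih rfl hpq
      have hc : (α d0)⁻¹ * (γ d0)⁻¹ = (γ d0)⁻¹ * (α d0)⁻¹ := by
        rw [← mul_inv_rev, ← mul_inv_rev, hcomm]
      simp only [SimpleGraph.Walk.darts_cons, List.map_cons, List.prod_cons]
      rw [hud, hγsymm, hαsymm, eα, eγ]
      have key2 : ∀ a0 g0 A P : G, a0⁻¹ * A * (A⁻¹ * g0⁻¹ * A * P) = a0⁻¹ * g0⁻¹ * (A * P) := by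
        intros; group
      rw [key2, key2, ih', hc]
  refine ⟨?_, ?_, ?_⟩
  · intro d
    rw [hus d, hγsymm d]
    group
  · intro d
    rw [hus d, hαsymm d]
    group
  · intro A
    obtain ⟨p0⟩ := hconn.preconnected (act v₀ A) v₀
    rw [hWrev _ Wγ' hWγ' _ _ p0.bypass, hWrev _ Wα' hWα' _ _ p0.bypass,
      mul_assoc, mul_assoc, main _ _ p0.bypass rfl p0.bypass_isPath]
end
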